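/- arXiv:0909.0833 — 4 statements merged into one kernel-verified Lean document; each statement's English description precedes it below -/
import Mathlib

section
/- Fix n ≥ 1, points X₁,…,Xₙ in an interval I, and functions w₁,…,wₙ, w̃₁,…,w̃ₙ : I → ℝ with w_i(x) ≥ 0 for all i and x, and Σ_{i=1}^n w_i(x) = 1 for all x ∈ I. Define ŵ_j(x) = w_j(x) + w̃_j(x) − Σ_{i=1}^n w_i(x) w̃_j(X_i). Then for every x ∈ I, Σ_{j=1}^n ŵ_j(x)² ≤ 3 Σ_{j=1}^n w_j(x)² + 6 sup_{u∈I} Σ_{j=1}^n w̃_j(u)². -/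
open Finset

theorem sum_sq_boosted_weights_le
    (n : ℕ) (hn : 1 ≤ n) (I : Set ℝ) (X : Fin n → ℝ) (hX : ∀ i, X i ∈ I)
    (w wt : Fin n → ℝ → ℝ)
    (hw_nonneg : ∀ i, ∀ x ∈ I, 0 ≤ w i x)
    (hw_sum : ∀ x ∈ I, ∑ i, w i x = 1)
    (hbdd : BddAbove ((fun u => ∑ j, (wt j u) ^ 2) '' I))
    (what : Fin n → ℝ → ℝ)
    (hwhat : ∀ j, ∀ x, what j x = w j x + wt j x - ∑ i, w i x * wt j (X i)) :
    ∀ x ∈ I, ∑ j, (what j x) ^ 2 ≤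
      3 * ∑ j, (w j x) ^ 2 + 6 * ⨆ u ∈ I, ∑ j, (wt j u) ^ 2 := by
  intro x hx
  set S : ℝ := ⨆ u ∈ I, ∑ j, (wt j u) ^ 2 with hS
  have hIne : I.Nonempty := ⟨X ⟨0, hn⟩, hX _⟩
  have hbdd' : BddAbove (Set.range fun u : I => ∑ j, (wt j (u : ℝ)) ^ 2) := by
    obtain ⟨B, hB⟩ := hbdd
    exact ⟨B, by rintro _ ⟨u, rfl⟩; exact hB ⟨u, u.2, rfl⟩⟩
  haveI : Nonempty I := hIne.to_subtype
  have hSeq : S = ⨆ u : I, ∑ j, (wt j (u : ℝ)) ^ 2 := by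
    rw [hS]
    refine (ciSup_subtype'' hbdd' ?_).symm
    rw [Real.sSup_empty]
    refine le_trans ?_ (le_ciSup hbdd' (Classical.arbitrary I))
    positivity
  have hSle : ∀ u ∈ I, ∑ j, (wt j u) ^ 2 ≤ S := fun u hu => by
    rw [hSeq]; exact le_ciSup hbdd' ⟨u, hu⟩
  -- step 1: pointwise bound
  have h1 : ∑ j, (what j x) ^ 2 ≤
      3 * ∑ j, (w j x) ^ 2 + 3 * ∑ j, (wt j x) ^ 2
        + 3 * ∑ j, (∑ i, w i x * wt j (X i)) ^ 2 := by
    have : ∀ j, (what j x) ^ 2 ≤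
        3 * (w j x) ^ 2 + 3 * (wt j x) ^ 2 + 3 * (∑ i, w i x * wt j (X i)) ^ 2 := by
      intro j
      rw [hwhat]
      set a := w j x; set b := wt j x; set c := ∑ i, w i x * wt j (X i)
      nlinarith [sq_nonneg (a - b), sq_nonneg (a - c), sq_nonneg (b + c)]
    calc ∑ j, (what j x) ^ 2
        ≤ ∑ j, (3 * (w j x) ^ 2 + 3 * (wt j x) ^ 2 + 3 * (∑ i, w i x * wt j (X i)) ^ 2) :=
          Finset.sum_le_sum fun j _ => this j
      _ = 3 * ∑ j, (w j x) ^ 2 + 3 * ∑ j, (wt j x) ^ 2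
            + 3 * ∑ j, (∑ i, w i x * wt j (X i)) ^ 2 := by
          rw [Finset.sum_add_distrib, Finset.sum_add_distrib, Finset.mul_sum,
            Finset.mul_sum, Finset.mul_sum]
  -- step 2: wt at x bounded by S
  have h2 : ∑ j, (wt j x) ^ 2 ≤ S := hSle x hx
  -- step 3: cross term bounded by S
  have h3 : ∑ j, (∑ i, w i x * wt j (X i)) ^ 2 ≤ S := by
    have hjen : ∀ j, (∑ i, w i x * wt j (X i)) ^ 2 ≤ ∑ i, w i x * (wt j (X i)) ^ 2 := by
      intro j
      have hcs := sum_mul_sq_le_sq_mul_sq Finset.univ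
        (fun i => Real.sqrt (w i x)) (fun i => Real.sqrt (w i x) * wt j (X i))
      have hrw : ∀ i : Fin n, Real.sqrt (w i x) * (Real.sqrt (w i x) * wt j (X i))
          = w i x * wt j (X i) := by
        intro i
        rw [← mul_assoc, Real.mul_self_sqrt (hw_nonneg i x hx)]
      have hrw2 : ∀ i : Fin n, (Real.sqrt (w i x)) ^ 2 = w i x := fun i =>
        Real.sq_sqrt (hw_nonneg i x hx)
      have hrw3 : ∀ i : Fin n, (Real.sqrt (w i x) * wt j (X i)) ^ 2
          = w i x * (wt j (X i)) ^ 2 := by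
        intro i; rw [mul_pow, hrw2]
      simp only [hrw, hrw2, hrw3] at hcs
      rwa [hw_sum x hx, one_mul] at hcs
    calc ∑ j, (∑ i, w i x * wt j (X i)) ^ 2
        ≤ ∑ j, ∑ i, w i x * (wt j (X i)) ^ 2 := Finset.sum_le_sum fun j _ => hjen j
      _ = ∑ i, w i x * ∑ j, (wt j (X i)) ^ 2 := by
          rw [Finset.sum_comm]; exact Finset.sum_congr rfl fun i _ => (Finset.mul_sum _ _ _).symm
      _ ≤ ∑ i, w i x * S := Finset.sum_le_sum fun i _ =>
          mul_le_mul_of_nonneg_left (hSle (X i) (hX i)) (hw_nonneg i x hx)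
      _ = S := by rw [← Finset.sum_mul, hw_sum x hx, one_mul]
  linarith
end

section
/- Let K : ℝ → ℝ be an even integrable function with ∫ K(u) du = 1 and ∫ u² |K(u)| du < ∞. Define the twicing kernel K* = 2K − (K ∗ K), where ∗ denotes convolution. Then ∫ K*(u) du = 1, ∫ u K*(u) du = 0, and ∫ u² K*(u) du = 0; that is, K* is a fourth-order kernel. -/
open MeasureTheory Convolution

theorem twicing_kernel_is_fourth_order
    (K : ℝ → ℝ) (hK_even : ∀ u, K (-u) = K u)
    (hK_int : Integrable K)
    (hK_one : ∫ u, K u = 1)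
    (hK_mom2 : Integrable (fun u => u ^ 2 * |K u|))
    (Kstar : ℝ → ℝ)
    (hKstar : ∀ x, Kstar x = 2 * K x - ∫ z, K (x - z) * K z) :
    (∫ u, Kstar u = 1) ∧ (∫ u, u * Kstar u = 0) ∧ (∫ u, u ^ 2 * Kstar u = 0) := by
  classical
  let L := ContinuousLinearMap.mul ℝ ℝ
  let f1 : ℝ → ℝ := fun u => u * K u
  let f2 : ℝ → ℝ := fun u => u ^ 2 * K u
  have hf2_int : Integrable f2 := by
    refine hK_mom2.mono' ?_ ?_
    · exact ((measurable_id.pow_const 2).aestronglyMeasurable.mul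
        hK_int.aestronglyMeasurable)
    · filter_upwards with u
      simp only [f2, Real.norm_eq_abs, abs_mul, abs_pow, sq_abs, le_refl]
  have hf1_int : Integrable f1 := by
    refine (hK_int.norm.add hK_mom2).mono' ?_ ?_
    · exact measurable_id.aestronglyMeasurable.mul hK_int.aestronglyMeasurable
    · filter_upwards with u
      simp only [f1, Pi.add_apply, Real.norm_eq_abs, abs_mul]
      have h1 : |u| ≤ 1 + |u| ^ 2 := by nlinarith [abs_nonneg u, sq_nonneg (|u| - 1)]
      have := mul_le_mul_of_nonneg_right h1 (abs_nonneg (K u))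
      calc |u| * |K u| ≤ (1 + |u| ^ 2) * |K u| := this
        _ = |K u| + u ^ 2 * |K u| := by rw [← sq_abs u]; ring
  have hf1_zero : ∫ u, f1 u = 0 := by
    have hneg : ∫ u, f1 (-u) = ∫ u, f1 u := integral_neg_eq_self f1 volume
    have h2 : ∫ u, f1 (-u) = - ∫ u, f1 u := by
      have : ∀ u : ℝ, f1 (-u) = - f1 u := by
        intro u; simp only [f1, hK_even, neg_mul]
      simp_rw [this, integral_neg]
    linarith [hneg.symm.trans h2]
  set M : ℝ := ∫ u, f2 u with hM
  have convL : ∀ (f g : ℝ → ℝ) (x : ℝ), (f ⋆[L] g) x = ∫ t, f t * g (x - t) := by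
    intro f g x
    simp [convolution_def, L, ContinuousLinearMap.mul_apply']
  have ceaInt : ∀ {f g : ℝ → ℝ} {x : ℝ}, ConvolutionExistsAt f g x L volume →
      Integrable (fun t => f t * g (x - t)) := by
    intro f g x h
    simpa [ConvolutionExistsAt, L, ContinuousLinearMap.mul_apply'] using h
  -- convolution term equals K ⋆ K
  have hconv_eq : ∀ x : ℝ, (∫ z, K (x - z) * K z) = (K ⋆[L] K) x := by
    intro x
    rw [convL]
    calc (∫ z, K (x - z) * K z) = ∫ z, K (x - (x - z)) * K (x - z) :=
          (integral_sub_left_eq_self (fun z => K (x - z) * K z) volume x).symm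
      _ = ∫ t, K t * K (x - t) := by congr 1; ext z; congr 2; ring
  have hae10 : ∀ᵐ x : ℝ, ConvolutionExistsAt f1 K x L volume := hf1_int.ae_convolution_exists _ hK_int
  have hae01 : ∀ᵐ x : ℝ, ConvolutionExistsAt K f1 x L volume := hK_int.ae_convolution_exists _ hf1_int
  have hae11 : ∀ᵐ x : ℝ, ConvolutionExistsAt f1 f1 x L volume := hf1_int.ae_convolution_exists _ hf1_int
  have hae20 : ∀ᵐ x : ℝ, ConvolutionExistsAt f2 K x L volume := hf2_int.ae_convolution_exists _ hK_int
  have hae02 : ∀ᵐ x : ℝ, ConvolutionExistsAt K f2 x L volume := hK_int.ae_convolution_exists _ hf2_int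
  have hi00 : Integrable (K ⋆[L] K) := hK_int.integrable_convolution _ hK_int
  have hi10 : Integrable (f1 ⋆[L] K) := hf1_int.integrable_convolution _ hK_int
  have hi01 : Integrable (K ⋆[L] f1) := hK_int.integrable_convolution _ hf1_int
  have hi11 : Integrable (f1 ⋆[L] f1) := hf1_int.integrable_convolution _ hf1_int
  have hi20 : Integrable (f2 ⋆[L] K) := hf2_int.integrable_convolution _ hK_int
  have hi02 : Integrable (K ⋆[L] f2) := hK_int.integrable_convolution _ hf2_int
  have hI00 : ∫ x, (K ⋆[L] K) x = 1 := by
    rw [integral_convolution _ hK_int hK_int]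
    simp [L, ContinuousLinearMap.mul_apply', hK_one]
  have hI10 : ∫ x, (f1 ⋆[L] K) x = 0 := by
    rw [integral_convolution _ hf1_int hK_int]
    simp [L, ContinuousLinearMap.mul_apply', hf1_zero]
  have hI01 : ∫ x, (K ⋆[L] f1) x = 0 := by
    rw [integral_convolution _ hK_int hf1_int]
    simp [L, ContinuousLinearMap.mul_apply', hf1_zero]
  have hI11 : ∫ x, (f1 ⋆[L] f1) x = 0 := by
    rw [integral_convolution _ hf1_int hf1_int]
    simp [L, ContinuousLinearMap.mul_apply', hf1_zero]
  have hI20 : ∫ x, (f2 ⋆[L] K) x = M := by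
    rw [integral_convolution _ hf2_int hK_int]
    simp [L, ContinuousLinearMap.mul_apply', hK_one, hM]
  have hI02 : ∫ x, (K ⋆[L] f2) x = M := by
    rw [integral_convolution _ hK_int hf2_int]
    simp [L, ContinuousLinearMap.mul_apply', hK_one, hM]
  have hmom1 : ∀ᵐ x : ℝ, x * (K ⋆[L] K) x = (f1 ⋆[L] K) x + (K ⋆[L] f1) x := by
    filter_upwards [hae10, hae01] with x h10 h01
    rw [convL, convL, convL, ← integral_const_mul, ← integral_add (ceaInt h10) (ceaInt h01)]
    congr 1; ext t
    simp only [f1]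
    ring
  have hmom2 : ∀ᵐ x : ℝ, x ^ 2 * (K ⋆[L] K) x
      = (f2 ⋆[L] K) x + (2 * (f1 ⋆[L] f1) x + (K ⋆[L] f2) x) := by
    filter_upwards [hae20, hae11, hae02] with x h20 h11 h02
    have hs1 : Integrable (fun a : ℝ => 2 * (f1 a * f1 (x - a)) + K a * f2 (x - a)) :=
      ((ceaInt h11).const_mul 2).add (ceaInt h02)
    rw [convL, convL, convL, convL, ← integral_const_mul, ← integral_const_mul,
      ← integral_add ((ceaInt h11).const_mul 2) (ceaInt h02),
      ← integral_add (ceaInt h20) hs1]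
    congr 1; ext t
    simp only [f1, f2]
    ring
  have hKs : ∀ x, Kstar x = 2 * K x - (K ⋆[L] K) x := by
    intro x; rw [hKstar x, hconv_eq x]
  refine ⟨?_, ?_, ?_⟩
  · have h : ∫ u, Kstar u = ∫ u, (2 * K u - (K ⋆[L] K) u) := by
      congr 1; ext u; exact hKs u
    rw [h, integral_sub (hK_int.const_mul 2) hi00, integral_const_mul, hK_one, hI00]
    norm_num
  · have heq : ∀ᵐ u : ℝ, u * Kstar u
        = 2 * f1 u - ((f1 ⋆[L] K) u + (K ⋆[L] f1) u) := by
      filter_upwards [hmom1] with u h1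
      rw [hKs u, mul_sub, ← h1]
      simp only [f1]; ring
    have hsum : Integrable (fun u => (f1 ⋆[L] K) u + (K ⋆[L] f1) u) := hi10.add hi01
    rw [integral_congr_ae heq, integral_sub (hf1_int.const_mul 2) hsum,
      integral_const_mul, hf1_zero, integral_add hi10 hi01, hI10, hI01]
    norm_num
  · have heq : ∀ᵐ u : ℝ, u ^ 2 * Kstar u
        = 2 * f2 u - ((f2 ⋆[L] K) u + (2 * (f1 ⋆[L] f1) u + (K ⋆[L] f2) u)) := by
      filter_upwards [hmom2] with u h2
      rw [hKs u, mul_sub, ← h2]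
      simp only [f2]; ring
    have h2i : Integrable (fun u => 2 * (f1 ⋆[L] f1) u) := hi11.const_mul 2
    have hsum1 : Integrable (fun u => 2 * (f1 ⋆[L] f1) u + (K ⋆[L] f2) u) := h2i.add hi02
    have hsum : Integrable (fun u => (f2 ⋆[L] K) u + (2 * (f1 ⋆[L] f1) u + (K ⋆[L] f2) u)) :=
      hi20.add hsum1
    rw [integral_congr_ae heq, integral_sub (hf2_int.const_mul 2) hsum,
      integral_const_mul, ← hM, integral_add hi20 hsum1, integral_add h2i hi02,
      integral_const_mul, hI20, hI11, hI02]
    ring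
end

section
/- Let q ≥ 1 be an integer and let L : ℝ → ℝ be integrable with ∫ L(u) du = 1, ∫ u^j L(u) du = 0 for 1 ≤ j ≤ q − 1, and ∫ |u|^{2q−1} |L(u)| du < ∞. Define L° = 2L − (L ∗ L). Then ∫ L°(u) du = 1 and ∫ u^j L°(u) du = 0 for all 1 ≤ j ≤ 2q − 1; that is, twicing a kernel of order q produces a kernel of order 2q. -/
open MeasureTheory

private def shearT : ℝ × ℝ ≃ᵐ ℝ × ℝ where
  toFun p := (p.1 - p.2, p.2)
  invFun p := (p.1 + p.2, p.2)
  left_inv p := by simp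
  right_inv p := by simp
  measurable_toFun := (measurable_fst.sub measurable_snd).prodMk measurable_snd
  measurable_invFun := (measurable_fst.add measurable_snd).prodMk measurable_snd

private lemma shearT_mp :
    MeasurePreserving shearT ((volume : Measure ℝ).prod volume) (volume.prod volume) :=
  measurePreserving_sub_prod volume volume

theorem twicing_doubles_kernel_order
    (q : ℕ) (hq : 1 ≤ q)
    (L : ℝ → ℝ) (hL_int : Integrable L)
    (hL_one : ∫ u, L u = 1)
    (hL_mom : ∀ j : ℕ, 1 ≤ j → j ≤ q - 1 → ∫ u, u ^ j * L u = 0)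
    (hL_abs : Integrable (fun u => |u| ^ (2 * q - 1) * |L u|))
    (Lt : ℝ → ℝ)
    (hLt : ∀ x, Lt x = 2 * L x - ∫ z, L (x - z) * L z) :
    (∫ u, Lt u = 1) ∧ ∀ j : ℕ, 1 ≤ j → j ≤ 2 * q - 1 → ∫ u, u ^ j * Lt u = 0 := by
  set N := 2 * q - 1 with hN
  have hmeas := hL_int.1
  -- integrability of all moments up to order N
  have hint : ∀ k : ℕ, k ≤ N → Integrable (fun u : ℝ => u ^ k * L u) := by
    intro k hk
    refine (hL_int.abs.add hL_abs).mono' ((continuous_pow k).aestronglyMeasurable.mul hmeas) ?_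
    filter_upwards with u
    simp only [norm_mul, Real.norm_eq_abs, abs_pow, Pi.add_apply, abs_abs]
    have h2 : |u| ^ k ≤ 1 + |u| ^ N := by
      rcases le_total |u| 1 with h | h
      · have h3 : |u| ^ k ≤ 1 := pow_le_one₀ (abs_nonneg u) h
        have h4 : (0:ℝ) ≤ |u| ^ N := pow_nonneg (abs_nonneg u) N
        linarith
      · have h3 : |u| ^ k ≤ |u| ^ N := pow_le_pow_right₀ h hk
        linarith
    calc |u| ^ k * |L u| ≤ (1 + |u| ^ N) * |L u| :=
          mul_le_mul_of_nonneg_right h2 (abs_nonneg _)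
      _ = |L u| + |u| ^ N * |L u| := by ring
  set m : ℕ → ℝ := fun k => ∫ u, u ^ k * L u with hm
  have hm0 : m 0 = 1 := by simpa [hm] using hL_one
  -- key: integrability and value of the moments of the convolution
  have key : ∀ j : ℕ, j ≤ N →
      Integrable (fun u : ℝ => ∫ z, u ^ j * (L (u - z) * L z)) ∧
      (∫ u : ℝ, ∫ z, u ^ j * (L (u - z) * L z)) =
        ∑ k ∈ Finset.range (j + 1), (j.choose k : ℝ) * (m k * m (j - k)) := by
    intro j hj
    have hGeq : (fun p : ℝ × ℝ => (p.1 + p.2) ^ j * (L p.1 * L p.2)) =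
        fun p : ℝ × ℝ => ∑ k ∈ Finset.range (j + 1),
          (j.choose k : ℝ) * ((p.1 ^ k * L p.1) * (p.2 ^ (j - k) * L p.2)) := by
      funext p
      rw [add_pow, Finset.sum_mul]
      refine Finset.sum_congr rfl fun k _ => by ring
    have hterm : ∀ k ∈ Finset.range (j + 1),
        Integrable (fun p : ℝ × ℝ =>
          (j.choose k : ℝ) * ((p.1 ^ k * L p.1) * (p.2 ^ (j - k) * L p.2)))
          (volume.prod volume) := by
      intro k hk
      have hk' : k ≤ N := le_trans (Nat.lt_succ_iff.mp (Finset.mem_range.mp hk)) hj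
      have hjk : j - k ≤ N := le_trans (Nat.sub_le _ _) hj
      exact ((hint k hk').mul_prod (hint (j - k) hjk)).const_mul _
    have hG : Integrable (fun p : ℝ × ℝ => (p.1 + p.2) ^ j * (L p.1 * L p.2))
        (volume.prod volume) := by
      rw [hGeq]
      exact integrable_finset_sum _ hterm
    have hcomp : (fun p : ℝ × ℝ => (p.1 + p.2) ^ j * (L p.1 * L p.2)) ∘ shearT =
        fun p : ℝ × ℝ => p.1 ^ j * (L (p.1 - p.2) * L p.2) := by
      funext p
      simp [shearT, Function.comp]
    have hF : Integrable (fun p : ℝ × ℝ => p.1 ^ j * (L (p.1 - p.2) * L p.2))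
        (volume.prod volume) := by
      rw [← hcomp]
      exact (shearT_mp.integrable_comp_emb shearT.measurableEmbedding).mpr hG
    constructor
    · exact hF.integral_prod_left
    · have h1 : (∫ u : ℝ, ∫ z, u ^ j * (L (u - z) * L z)) =
          ∫ p : ℝ × ℝ, p.1 ^ j * (L (p.1 - p.2) * L p.2) ∂(volume.prod volume) :=
        MeasureTheory.integral_integral hF
      have h2 : integral (volume.prod volume)
          ((fun p : ℝ × ℝ => (p.1 + p.2) ^ j * (L p.1 * L p.2)) ∘ shearT) =
          ∫ p : ℝ × ℝ, (p.1 + p.2) ^ j * (L p.1 * L p.2) ∂(volume.prod volume) :=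
        by
          rw [Function.comp_def]
          exact shearT_mp.integral_comp shearT.measurableEmbedding
            (fun p : ℝ × ℝ => (p.1 + p.2) ^ j * (L p.1 * L p.2))
      rw [h1, ← hcomp, h2, hGeq, integral_finset_sum _ hterm]
      refine Finset.sum_congr rfl fun k hk => ?_
      rw [integral_const_mul,
        integral_prod_mul (fun x : ℝ => x ^ k * L x) (fun x : ℝ => x ^ (j - k) * L x)]
  -- moments of Lt
  have hLtmom : ∀ j : ℕ, j ≤ N → (∫ u, (u:ℝ) ^ j * Lt u) =
      2 * m j - ∑ k ∈ Finset.range (j + 1), (j.choose k : ℝ) * (m k * m (j - k)) := by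
    intro j hj
    have hconv : (fun u : ℝ => u ^ j * ∫ z, L (u - z) * L z) =
        fun u : ℝ => ∫ z, u ^ j * (L (u - z) * L z) := by
      funext u
      rw [integral_const_mul]
    have heq : (fun u : ℝ => u ^ j * Lt u) =
        fun u : ℝ => 2 * (u ^ j * L u) - ∫ z, u ^ j * (L (u - z) * L z) := by
      funext u
      rw [hLt u, ← congrFun hconv u]
      ring
    rw [heq, integral_sub (((hint j hj).const_mul 2)) (key j hj).1,
      integral_const_mul, (key j hj).2]
  have hN1 : 1 ≤ N := by omega
  constructor
  · have h0 : (∫ u, (u:ℝ) ^ 0 * Lt u) = ∫ u, Lt u := by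
      simp
    have := hLtmom 0 (Nat.zero_le N)
    rw [h0] at this
    norm_num [hm0] at this
    exact this
  · intro j hj1 hjN
    rw [hLtmom j hjN]
    have hsum : ∑ k ∈ Finset.range (j + 1), (j.choose k : ℝ) * (m k * m (j - k)) = 2 * m j := by
      have hsub : ({0, j} : Finset ℕ) ⊆ Finset.range (j + 1) := by
        intro k hk
        simp only [Finset.mem_insert, Finset.mem_singleton] at hk
        rcases hk with rfl | rfl <;> simp [Nat.lt_succ_iff, hj1]
      rw [← Finset.sum_subset hsub]
      · rw [Finset.sum_pair (by omega : (0:ℕ) ≠ j)]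
        simp [hm0, Nat.sub_self]
        ring
      · intro k hk hk'
        simp only [Finset.mem_insert, Finset.mem_singleton, not_or] at hk'
        obtain ⟨hk0, hkj⟩ := hk'
        have hkj' : k < j + 1 := Finset.mem_range.mp hk
        rcases le_or_gt k (q - 1) with h | h
        · have : m k = 0 := hL_mom k (by omega) h
          rw [this]; ring
        · have h1 : 1 ≤ j - k := by omega
          have h2 : j - k ≤ q - 1 := by omega
          have : m (j - k) = 0 := hL_mom (j - k) h1 h2
          rw [this]; ring
    rw [hsum]
    ring
end

section
/- Let K : ℝ → ℝ be an even nonnegative integrable function with ∫ K(u) du = 1 and support contained in [−1,1]. Define recursively K^{[0]} = K and K^{[r]} = 2K^{[r−1]} − (K^{[r−1]} ∗ K^{[r−1]}) for r ≥ 1. Then for every r ≥ 0, ∫ K^{[r]}(u) du = 1 and ∫ u^j K^{[r]}(u) du = 0 for all 1 ≤ j ≤ 2(r+1) − 1; that is, K^{[r]} is a kernel of order 2(r+1). -/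
open MeasureTheory

/-- The iterated twicing kernels `K^[r]`, with `K^[0] = K` and
`K^[r] = 2 K^[r-1] - (K^[r-1] * K^[r-1])` (convolution). -/
noncomputable def iterTwicingKernel (K : ℝ → ℝ) : ℕ → ℝ → ℝ
  | 0 => K
  | r + 1 => fun x =>
      2 * iterTwicingKernel K r x - ∫ z, iterTwicingKernel K r (x - z) * iterTwicingKernel K r z

/-- If `f` is integrable with support in `[-M, M]`, then `u ^ j * f u` is integrable. -/
lemma mom_integrable {f : ℝ → ℝ} (hf : Integrable f) {M : ℝ} (hM : 0 ≤ M)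
    (hs : Function.support f ⊆ Set.Icc (-M) M) (j : ℕ) :
    Integrable (fun u => u ^ j * f u) := by
  refine Integrable.mono' (g := fun u => M ^ j * ‖f u‖) (hf.norm.const_mul _)
    ((measurable_id.pow_const j).aestronglyMeasurable.mul hf.aestronglyMeasurable) ?_
  filter_upwards with u
  rcases eq_or_ne (f u) 0 with h | h
  · simp [h, mul_nonneg (pow_nonneg hM j) (norm_nonneg _)]
  · have hu : u ∈ Set.Icc (-M) M := hs h
    have habs : |u| ≤ M := abs_le.2 ⟨hu.1, hu.2⟩
    rw [norm_mul, norm_pow, Real.norm_eq_abs]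
    exact mul_le_mul_of_nonneg_right (pow_le_pow_left₀ (abs_nonneg u) habs j) (norm_nonneg _)

/-- Moments of a convolution of two integrable compactly supported functions. -/
lemma conv_moment {f g : ℝ → ℝ} (hf : Integrable f) (hg : Integrable g)
    {M N : ℝ} (hM : 0 ≤ M) (hN : 0 ≤ N)
    (hsf : Function.support f ⊆ Set.Icc (-M) M)
    (hsg : Function.support g ⊆ Set.Icc (-N) N) (j : ℕ) :
    ∫ x, x ^ j * ∫ z, f (x - z) * g z =
      ∑ k ∈ Finset.range (j + 1),
        (j.choose k : ℝ) * (∫ y, y ^ k * f y) * (∫ z, z ^ (j - k) * g z) := by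
  have hconv : Integrable (fun p : ℝ × ℝ => f (p.1 - p.2) * g p.2) (volume.prod volume) := by
    have h := hg.convolution_integrand (ContinuousLinearMap.mul ℝ ℝ) hf
    simpa [mul_comm] using h
  have hF : Integrable (fun p : ℝ × ℝ => p.1 ^ j * (f (p.1 - p.2) * g p.2))
      (volume.prod volume) := by
    refine Integrable.mono' (g := fun p => (M + N) ^ j * ‖f (p.1 - p.2) * g p.2‖)
      (hconv.norm.const_mul _)
      ((measurable_fst.pow_const j).aestronglyMeasurable.mul hconv.aestronglyMeasurable) ?_
    filter_upwards with p
    rcases eq_or_ne (f (p.1 - p.2) * g p.2) 0 with h | h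
    · simp [h, mul_nonneg (pow_nonneg (add_nonneg hM hN) j) (norm_nonneg _)]
    · have hfz : f (p.1 - p.2) ≠ 0 := fun h0 => h (by simp [h0])
      have hgz : g p.2 ≠ 0 := fun h0 => h (by simp [h0])
      have h1 : p.1 - p.2 ∈ Set.Icc (-M) M := hsf hfz
      have h2 : p.2 ∈ Set.Icc (-N) N := hsg hgz
      have habs1 : |p.1 - p.2| ≤ M := abs_le.2 ⟨h1.1, h1.2⟩
      have habs2 : |p.2| ≤ N := abs_le.2 ⟨h2.1, h2.2⟩
      have habs : |p.1| ≤ M + N := by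
        calc |p.1| = |(p.1 - p.2) + p.2| := by ring_nf
        _ ≤ |p.1 - p.2| + |p.2| := abs_add_le _ _
        _ ≤ M + N := add_le_add habs1 habs2
      rw [norm_mul, norm_pow, Real.norm_eq_abs]
      exact mul_le_mul_of_nonneg_right (pow_le_pow_left₀ (abs_nonneg _) habs j) (norm_nonneg _)
  have hmomf : ∀ k : ℕ, Integrable (fun y => y ^ k * f y) := fun k =>
    mom_integrable hf hM hsf k
  have hmomg : ∀ k : ℕ, Integrable (fun z => z ^ k * g z) := fun k =>
    mom_integrable hg hN hsg k
  calc ∫ x, x ^ j * ∫ z, f (x - z) * g z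
      = ∫ x, ∫ z, x ^ j * (f (x - z) * g z) := by
        refine integral_congr_ae (Filter.Eventually.of_forall fun x => ?_)
        show x ^ j * (∫ z, f (x - z) * g z) = ∫ z, x ^ j * (f (x - z) * g z)
        rw [integral_const_mul]
    _ = ∫ z, ∫ x, x ^ j * (f (x - z) * g z) := integral_integral_swap hF
    _ = ∫ z, g z * ∑ k ∈ Finset.range (j + 1),
          (j.choose k : ℝ) * (∫ y, y ^ k * f y) * z ^ (j - k) := by
        refine integral_congr_ae (Filter.Eventually.of_forall fun z => ?_)
        show (∫ x, x ^ j * (f (x - z) * g z)) = g z * ∑ k ∈ Finset.range (j + 1),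
          (j.choose k : ℝ) * (∫ y, y ^ k * f y) * z ^ (j - k)
        have h1 : ∫ x, x ^ j * (f (x - z) * g z) = ∫ y, (y + z) ^ j * (f y * g z) := by
          rw [← integral_add_right_eq_self (fun x => x ^ j * (f (x - z) * g z)) z]
          simp
        rw [h1]
        have h2 : ∀ y : ℝ, (y + z) ^ j * (f y * g z) =
            ∑ k ∈ Finset.range (j + 1),
              (z ^ (j - k) * (j.choose k : ℝ) * g z) * (y ^ k * f y) := by
          intro y
          rw [add_pow, Finset.sum_mul]
          exact Finset.sum_congr rfl fun k _ => by ring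
        rw [integral_congr_ae (Filter.Eventually.of_forall fun y => h2 y),
          integral_finset_sum _ fun k _ => (hmomf k).const_mul _]
        rw [Finset.mul_sum]
        refine Finset.sum_congr rfl fun k _ => ?_
        rw [integral_const_mul]
        ring
    _ = ∑ k ∈ Finset.range (j + 1),
          (j.choose k : ℝ) * (∫ y, y ^ k * f y) * (∫ z, z ^ (j - k) * g z) := by
        have h3 : ∀ z : ℝ, g z * ∑ k ∈ Finset.range (j + 1),
            (j.choose k : ℝ) * (∫ y, y ^ k * f y) * z ^ (j - k) =
            ∑ k ∈ Finset.range (j + 1),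
              ((j.choose k : ℝ) * (∫ y, y ^ k * f y)) * (z ^ (j - k) * g z) := by
          intro z
          rw [Finset.mul_sum]
          exact Finset.sum_congr rfl fun k _ => by ring
        rw [integral_congr_ae (Filter.Eventually.of_forall h3),
          integral_finset_sum _ fun k _ => (hmomg (j - k)).const_mul _]
        exact Finset.sum_congr rfl fun k _ => by rw [integral_const_mul]

theorem iterated_twicing_kernel_order
    (K : ℝ → ℝ) (hK_even : ∀ u, K (-u) = K u) (hK_nonneg : ∀ u, 0 ≤ K u)
    (hK_int : Integrable K)
    (hK_one : ∫ u, K u = 1)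
    (hK_supp : Function.support K ⊆ Set.Icc (-1 : ℝ) 1) :
    ∀ r : ℕ, (∫ u, iterTwicingKernel K r u = 1) ∧
      ∀ j : ℕ, 1 ≤ j → j ≤ 2 * (r + 1) - 1 → ∫ u, u ^ j * iterTwicingKernel K r u = 0 := by
  -- strengthened induction
  suffices h : ∀ r : ℕ, Integrable (iterTwicingKernel K r) ∧
      Function.support (iterTwicingKernel K r) ⊆ Set.Icc (-(2 ^ r : ℝ)) (2 ^ r) ∧
      (∫ u, iterTwicingKernel K r u = 1) ∧
      ∀ j : ℕ, 1 ≤ j → j ≤ 2 * r + 1 → ∫ u, u ^ j * iterTwicingKernel K r u = 0 by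
    intro r
    obtain ⟨-, -, h1, h2⟩ := h r
    refine ⟨h1, fun j hj1 hj2 => h2 j hj1 ?_⟩
    omega
  intro r
  induction r with
  | zero =>
    refine ⟨hK_int, by simpa [iterTwicingKernel] using hK_supp, hK_one, fun j hj1 hj2 => ?_⟩
    have hj : j = 1 := by omega
    subst hj
    show (∫ u, u ^ 1 * K u) = 0
    -- odd function integrates to zero
    have h1 : ∫ u, u ^ 1 * K u = ∫ u, (-u) ^ 1 * K (-u) :=
      (integral_neg_eq_self (fun u => u ^ 1 * K u) volume).symm
    have h2 : ∀ u : ℝ, (-u) ^ 1 * K (-u) = -(u ^ 1 * K u) := by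
      intro u; rw [hK_even]; ring
    rw [integral_congr_ae (Filter.Eventually.of_forall h2), integral_neg] at h1
    linarith [h1]
  | succ r ih =>
    obtain ⟨hi, hsupp, hone, hmom⟩ := ih
    set f := iterTwicingKernel K r with hfdef
    set m : ℝ := 2 ^ r with hmdef
    have hm0 : (0:ℝ) ≤ m := by positivity
    -- zero'th moment
    have hmom0 : ∫ y, y ^ 0 * f y = 1 := by simpa using hone
    -- the convolution and its properties
    set c : ℝ → ℝ := fun x => ∫ z, f (x - z) * f z with hcdef
    have hFprod : Integrable (fun p : ℝ × ℝ => f (p.1 - p.2) * f p.2)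
        (volume.prod volume) := by
      have h := hi.convolution_integrand (ContinuousLinearMap.mul ℝ ℝ) hi
      simpa [mul_comm] using h
    have hc_int : Integrable c := by
      have := hFprod.integral_prod_left
      simpa [hcdef] using this
    have hc_supp : Function.support c ⊆ Set.Icc (-(2 ^ (r + 1) : ℝ)) (2 ^ (r + 1)) := by
      intro x hx
      by_contra hmem
      apply hx
      have hzero : ∀ z : ℝ, f (x - z) * f z = 0 := by
        intro z
        rcases eq_or_ne (f z) 0 with h0 | h0
        · simp [h0]
        · have hz : z ∈ Set.Icc (-m) m := hsupp h0
          have hzabs : |z| ≤ m := abs_le.2 ⟨hz.1, hz.2⟩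
          have hxabs : ¬ |x| ≤ 2 ^ (r + 1) := fun hle =>
            hmem (Set.mem_Icc.2 (abs_le.1 hle))
          push_neg at hxabs
          have hsub : ¬ |x - z| ≤ m := by
            intro hle
            have : |x| ≤ |x - z| + |z| := by
              calc |x| = |(x - z) + z| := by ring_nf
              _ ≤ |x - z| + |z| := abs_add_le _ _
            have : |x| ≤ m + m := le_trans this (add_le_add hle hzabs)
            have h2m : m + m = 2 ^ (r + 1) := by rw [hmdef]; ring
            rw [h2m] at this
            linarith
          have hfsub : f (x - z) = 0 := by
            by_contra hne
            exact hsub (abs_le.2 ⟨(hsupp hne).1, (hsupp hne).2⟩)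
          simp [hfsub]
      simp [hcdef, hzero]
    -- convolution moments
    have hconvmom : ∀ j : ℕ, ∫ x, x ^ j * c x =
        ∑ k ∈ Finset.range (j + 1),
          (j.choose k : ℝ) * (∫ y, y ^ k * f y) * (∫ z, z ^ (j - k) * f z) :=
      fun j => conv_moment hi hi hm0 hm0 hsupp hsupp j
    -- the next kernel as a function
    have hnext : iterTwicingKernel K (r + 1) = fun x => 2 * f x - c x := rfl
    have hsupp' : Function.support (iterTwicingKernel K (r + 1)) ⊆
        Set.Icc (-(2 ^ (r + 1) : ℝ)) (2 ^ (r + 1)) := by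
      intro x hx
      by_contra hmem
      apply hx
      have hcx : c x = 0 := by
        by_contra hne
        exact hmem (hc_supp hne)
      have hfx : f x = 0 := by
        by_contra hne
        apply hmem
        have hz : x ∈ Set.Icc (-m) m := hsupp hne
        have : |x| ≤ m := abs_le.2 ⟨hz.1, hz.2⟩
        have hmle : m ≤ 2 ^ (r + 1) := by
          rw [hmdef]
          have : (2:ℝ) ^ r ≤ 2 ^ (r + 1) := by
            apply pow_le_pow_right₀ (by norm_num) (by omega)
          exact this
        exact Set.mem_Icc.2 (abs_le.1 (le_trans this hmle))
      rw [hnext]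
      simp [hfx, hcx]
    have hint' : Integrable (iterTwicingKernel K (r + 1)) := by
      rw [hnext]
      exact (hi.const_mul 2).sub hc_int
    -- total integral
    have hc_one : ∫ x, c x = 1 := by
      have h := hconvmom 0
      simpa [hone] using h
    have hone' : ∫ u, iterTwicingKernel K (r + 1) u = 1 := by
      rw [hnext, integral_sub (hi.const_mul 2) hc_int, integral_const_mul, hone, hc_one]
      norm_num
    refine ⟨hint', hsupp', hone', fun j hj1 hj2 => ?_⟩
    -- moments
    have hmomf : Integrable (fun u => u ^ j * f u) := mom_integrable hi hm0 hsupp j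
    have hmomc : Integrable (fun u => u ^ j * c u) :=
      mom_integrable hc_int (by positivity) hc_supp j
    have hsplit : ∫ u, u ^ j * iterTwicingKernel K (r + 1) u =
        2 * (∫ u, u ^ j * f u) - ∫ u, u ^ j * c u := by
      rw [hnext]
      have : ∀ u : ℝ, u ^ j * (2 * f u - c u) = 2 * (u ^ j * f u) - u ^ j * c u := by
        intro u; ring
      rw [integral_congr_ae (Filter.Eventually.of_forall this),
        integral_sub (hmomf.const_mul 2) hmomc, integral_const_mul]
    -- compute the convolution moment: only k = 0 and k = j survive
    have hterm : ∀ k ∈ Finset.range (j + 1), k ≠ 0 → k ≠ j →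
        (j.choose k : ℝ) * (∫ y, y ^ k * f y) * (∫ z, z ^ (j - k) * f z) = 0 := by
      intro k hk hk0 hkj
      have hkj' : k < j + 1 := Finset.mem_range.1 hk
      rcases le_or_gt (2 * k) j with hle | hlt
      · have hk1 : 1 ≤ k := by omega
        have hk2 : k ≤ 2 * r + 1 := by omega
        rw [hmom k hk1 hk2]
        ring
      · have hk1 : 1 ≤ j - k := by omega
        have hk2 : j - k ≤ 2 * r + 1 := by omega
        rw [hmom (j - k) hk1 hk2]
        ring
    have hsum : ∑ k ∈ Finset.range (j + 1),
        (j.choose k : ℝ) * (∫ y, y ^ k * f y) * (∫ z, z ^ (j - k) * f z) =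
        2 * (∫ u, u ^ j * f u) := by
      have h0j : (0:ℕ) ≠ j := by omega
      rw [Finset.sum_eq_add_of_mem 0 j (Finset.mem_range.2 (by omega))
        (Finset.mem_range.2 (by omega)) h0j (fun k hk h => hterm k hk h.1 h.2)]
      simp only [Nat.choose_zero_right, Nat.choose_self, Nat.sub_zero, Nat.sub_self,
        Nat.cast_one, pow_zero, one_mul]
      rw [hone]
      ring
    rw [hsplit, hconvmom j, hsum]
    ring
end
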